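/- Let a ∈ ℍⁿ be an arbitrary quaternion vector and let v ∈ ℝⁿ be a real vector with ‖v‖ = 1. Then there exist a quaternion vector u ∈ ℍⁿ with ‖u‖ = √2 and a quaternion scalar z with |z| = 1 such that for every index i we have z * (aᵢ − uᵢ * (∑ⱼ (star uⱼ) * aⱼ)) = ‖a‖ * vᵢ; that is, the left Householder matrix H = z(I − u ūᵀ) satisfies H a = ‖a‖ v (where v is regarded as a quaternion vector via the real-to-quaternion coercion). -/

import Mathlib

open Quaternion

private lemma quat_coe_sum {ι : Type*} (s : Finset ι) (f : ι → ℝ) :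
    ((∑ i ∈ s, f i : ℝ) : Quaternion ℝ) = ∑ i ∈ s, ((f i : ℝ) : Quaternion ℝ) := by
  have h := map_sum (algebraMap ℝ (Quaternion ℝ)) f s
  rwa [Quaternion.algebraMap_def] at h

theorem left_quaternion_householder (n : ℕ) (a : Fin n → Quaternion ℝ) (v : Fin n → ℝ)
    (hv : Real.sqrt (∑ i, (v i) ^ 2) = 1) :
    ∃ (u : Fin n → Quaternion ℝ) (z : Quaternion ℝ),
      Real.sqrt (∑ i, ‖u i‖ ^ 2) = Real.sqrt 2 ∧ ‖z‖ = 1 ∧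
      ∀ i, z * (a i - u i * (∑ j, star (u j) * a j)) =
        ((Real.sqrt (∑ k, ‖a k‖ ^ 2) : ℝ) : Quaternion ℝ) * ((v i : ℝ) : Quaternion ℝ) := by
  have hv2 : (∑ i, (v i) ^ 2) = 1 := by
    have h0 : (0:ℝ) ≤ ∑ i, (v i) ^ 2 := Finset.sum_nonneg fun i _ => sq_nonneg _
    nlinarith [Real.sq_sqrt h0, hv]
  set α : ℝ := Real.sqrt (∑ k, ‖a k‖ ^ 2) with hα
  have hsumA0 : (0:ℝ) ≤ ∑ k, ‖a k‖ ^ 2 := Finset.sum_nonneg fun i _ => sq_nonneg _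
  have hα2 : α ^ 2 = ∑ k, ‖a k‖ ^ 2 := Real.sq_sqrt hsumA0
  have hα0 : 0 ≤ α := Real.sqrt_nonneg _
  classical
  by_cases ha : a = 0
  · -- a = 0
    have hα_eq : α = 0 := by
      simp [hα, ha, Real.sqrt_eq_zero']
    refine ⟨fun i => ((Real.sqrt 2 * v i : ℝ) : Quaternion ℝ), 1, ?_, by simp, ?_⟩
    · have : ∀ i, ‖((Real.sqrt 2 * v i : ℝ) : Quaternion ℝ)‖ ^ 2 = 2 * (v i)^2 := by
        intro i
        rw [Quaternion.norm_coe, Real.norm_eq_abs, sq_abs, mul_pow,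
          Real.sq_sqrt (by norm_num : (0:ℝ) ≤ 2)]
      simp_rw [this, ← Finset.mul_sum, hv2, mul_one]
    · intro i
      simp [ha, hα_eq]
  · -- a ≠ 0
    have hαpos : 0 < α := by
      rw [hα]
      apply Real.sqrt_pos.mpr
      obtain ⟨i, hi⟩ := Function.ne_iff.mp ha
      exact Finset.sum_pos' (fun j _ => sq_nonneg _)
        ⟨i, Finset.mem_univ i, pow_pos (norm_pos_iff.mpr hi) 2⟩
    set ρ : Quaternion ℝ := ∑ j, ((v j : ℝ) : Quaternion ℝ) * a j with hρ
    set z : Quaternion ℝ := if ρ = 0 then 1 else -(star ρ) * ((‖ρ‖⁻¹ : ℝ) : Quaternion ℝ) with hz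
    have hznorm : ‖z‖ = 1 := by
      rw [hz]
      split_ifs with h
      · simp
      · rw [norm_mul, norm_neg, Quaternion.norm_star, Quaternion.norm_coe,
          Real.norm_eq_abs, abs_inv, abs_norm]
        field_simp [norm_ne_zero_iff.mpr h]
    have hzρ : z * ρ = -((‖ρ‖ : ℝ) : Quaternion ℝ) := by
      rw [hz]
      split_ifs with h
      · simp [h]
      · rw [neg_mul, neg_mul, neg_inj, mul_assoc, Quaternion.coe_commutes, ← mul_assoc,
          Quaternion.star_mul_self, normSq_eq_norm_mul_self, ← Quaternion.coe_mul,
          Quaternion.coe_inj]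
        field_simp [norm_ne_zero_iff.mpr h]
    have hzz : z * star z = 1 := by
      rw [Quaternion.self_mul_star, normSq_eq_norm_mul_self, hznorm]
      norm_num
    set s : ℝ := Real.sqrt (α ^ 2 + α * ‖ρ‖) with hsdef
    have hsarg : (0:ℝ) ≤ α ^ 2 + α * ‖ρ‖ := add_nonneg (sq_nonneg α) (mul_nonneg hα0 (norm_nonneg ρ))
    have hs2 : s ^ 2 = α ^ 2 + α * ‖ρ‖ := Real.sq_sqrt hsarg
    have hspos : 0 < s := Real.sqrt_pos.mpr (by nlinarith [norm_nonneg ρ])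
    set b : Fin n → Quaternion ℝ := fun i => star z * ((α * v i : ℝ) : Quaternion ℝ) with hb
    set u : Fin n → Quaternion ℝ := fun i => (a i - b i) * ((s⁻¹ : ℝ) : Quaternion ℝ) with hu
    -- cross term
    have hba : ∑ j, star (b j) * a j = -((α * ‖ρ‖ : ℝ) : Quaternion ℝ) := by
      have h1 : ∀ j, star (b j) * a j
          = ((α : ℝ) : Quaternion ℝ) * (z * (((v j : ℝ) : Quaternion ℝ) * a j)) := by
        intro j
        rw [hb]
        simp only [star_mul, star_star, Quaternion.star_coe]
        simp only [Quaternion.coe_mul, Quaternion.coe_mul_eq_smul, smul_mul_assoc,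
          mul_smul_comm, smul_smul]
        module
      rw [Finset.sum_congr rfl fun j _ => h1 j, ← Finset.mul_sum, ← Finset.mul_sum, ← hρ,
        hzρ, mul_neg, ← Quaternion.coe_mul]
    have hbb : ∑ j, star (b j) * b j = ((α ^ 2 : ℝ) : Quaternion ℝ) := by
      have h1 : ∀ j, star (b j) * b j = (((α * v j) ^ 2 : ℝ) : Quaternion ℝ) := by
        intro j
        rw [hb]
        simp only [star_mul, star_star, Quaternion.star_coe]
        rw [mul_assoc, ← mul_assoc z, hzz, one_mul, ← Quaternion.coe_mul, sq]
      rw [Finset.sum_congr rfl fun j _ => h1 j, ← quat_coe_sum, Quaternion.coe_inj]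
      have : ∀ j, (α * v j) ^ 2 = α ^ 2 * (v j) ^ 2 := fun j => by ring
      rw [Finset.sum_congr rfl fun j _ => this j, ← Finset.mul_sum, hv2, mul_one]
    have haa : ∑ j, star (a j) * a j = ((α ^ 2 : ℝ) : Quaternion ℝ) := by
      have h1 : ∀ j, star (a j) * a j = ((‖a j‖ ^ 2 : ℝ) : Quaternion ℝ) := by
        intro j
        rw [Quaternion.star_mul_self, normSq_eq_norm_mul_self, sq]
      rw [Finset.sum_congr rfl fun j _ => h1 j, ← quat_coe_sum, Quaternion.coe_inj, hα2]
    have hwa : ∑ j, star (a j - b j) * a j = ((s ^ 2 : ℝ) : Quaternion ℝ) := by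
      have h1 : ∀ j, star (a j - b j) * a j = star (a j) * a j - star (b j) * a j := by
        intro j; rw [star_sub, sub_mul]
      rw [Finset.sum_congr rfl fun j _ => h1 j, Finset.sum_sub_distrib, haa, hba, hs2,
        sub_neg_eq_add, Quaternion.coe_mul]
      push_cast
      rfl
    have hsum : ∑ j, star (u j) * a j = ((s : ℝ) : Quaternion ℝ) := by
      have h1 : ∀ j, star (u j) * a j
          = ((s⁻¹ : ℝ) : Quaternion ℝ) * (star (a j - b j) * a j) := by
        intro j
        rw [hu]
        simp only [star_mul, Quaternion.star_coe]
        rw [mul_assoc]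
      rw [Finset.sum_congr rfl fun j _ => h1 j, ← Finset.mul_sum, hwa, ← Quaternion.coe_mul,
        Quaternion.coe_inj]
      field_simp
    -- norm of u
    have hab : ∑ j, star (a j) * b j = -((α * ‖ρ‖ : ℝ) : Quaternion ℝ) := by
      have h1 : ∀ j, star (a j) * b j = star (star (b j) * a j) := by
        intro j; rw [star_mul, star_star]
      rw [Finset.sum_congr rfl fun j _ => h1 j, ← star_sum, hba]
      simp [Quaternion.star_coe]
      rw [← Quaternion.coe_mul, ← Quaternion.coe_mul, mul_comm]
    have hw2 : ∑ i, ‖a i - b i‖ ^ 2 = 2 * s ^ 2 := by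
      have h1 : ∀ j, ((‖a j - b j‖ ^ 2 : ℝ) : Quaternion ℝ)
          = star (a j) * a j - star (a j) * b j - star (b j) * a j + star (b j) * b j := by
        intro j
        rw [sq, ← normSq_eq_norm_mul_self, ← Quaternion.star_mul_self, star_sub]
        noncomm_ring
      have key : ((∑ i, ‖a i - b i‖ ^ 2 : ℝ) : Quaternion ℝ)
          = ((s ^ 2 + s ^ 2 : ℝ) : Quaternion ℝ) := by
        rw [quat_coe_sum, Finset.sum_congr rfl fun j _ => h1 j]
        simp only [Finset.sum_add_distrib, Finset.sum_sub_distrib]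
        rw [haa, hab, hba, hbb, hs2]
        push_cast
        abel
      have key2 := Quaternion.coe_injective key
      linarith
    have hs_ne : s ≠ 0 := ne_of_gt hspos
    refine ⟨u, z, ?_, hznorm, ?_⟩
    · have h1 : ∀ i, ‖u i‖ ^ 2 = ‖a i - b i‖ ^ 2 * (s⁻¹) ^ 2 := by
        intro i
        rw [hu]
        rw [norm_mul, Quaternion.norm_coe, Real.norm_eq_abs, abs_inv, abs_of_pos hspos,
          mul_pow]
      rw [Finset.sum_congr rfl fun i _ => h1 i, ← Finset.sum_mul, hw2]
      congr 1
      field_simp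
    · intro i
      rw [hsum, hu]
      have h2 : (a i - b i) * ((s⁻¹ : ℝ) : Quaternion ℝ) * ((s : ℝ) : Quaternion ℝ)
          = a i - b i := by
        rw [mul_assoc, ← Quaternion.coe_mul, inv_mul_cancel₀ hs_ne]
        simp
      rw [h2, sub_sub_cancel, hb, ← mul_assoc, hzz, one_mul, Quaternion.coe_mul]
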